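/- For multisegments, if ε_i(M) + ε_i*(M) + ⟨wt(M), α_i^∨⟩ ≥ 2, then f_i(f_i*(M)) = f_i*(f_i(M)). -/

import Mathlib

/-- A segment `[a,b]` is a pair of integers. -/
abbrev Seg : Type := ℕ × ℕ

/-- A multisegment is a finite multiset of segments. -/
abbrev MS : Type := Multiset Seg

/-- `M ∈ MS_n`: all segments `[a,b]` satisfy `1 ≤ a ≤ b ≤ n`. -/
def IsMS (n : ℕ) (M : MS) : Prop := ∀ s ∈ M, 1 ≤ s.1 ∧ s.1 ≤ s.2 ∧ s.2 ≤ n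

/-- A bracket: `op` = "(", `cl` = ")". -/
inductive Br | op | cl
deriving DecidableEq

/-- One step of the left-to-right bracket cancellation procedure.  The state
`(cls, ops)` records the tags of the currently uncanceled ")" (in order) and the
currently uncanceled "(" (in order).  A new "(" is appended to `ops`; a new ")"
cancels the last uncanceled "(" if there is one, and otherwise is appended to `cls`. -/
def step {τ : Type} : (List τ × List τ) → (Br × τ) → (List τ × List τ)
  | (cls, ops), (Br.op, s) => (cls, ops ++ [s])
  | (cls, ops), (Br.cl, s) => if ops.isEmpty then (cls ++ [s], ops) else (cls, ops.dropLast)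

/-- Process a tagged bracket string; the result `(cls, ops)` lists the tags of the
uncanceled ")" and the uncanceled "(" (left to right).  The reduced (uncanceled)
string is `")"^cls.length ++ "("^ops.length`. -/
def scan {τ : Type} (l : List (Br × τ)) : List τ × List τ := l.foldl step ([], [])

/-- Number of uncanceled ")" in a tagged bracket string. -/
def urStr {τ : Type} (l : List (Br × τ)) : ℕ := (scan l).1.length

/-- Number of uncanceled "(" in a tagged bracket string. -/
def epsStr {τ : Type} (l : List (Br × τ)) : ℕ := (scan l).2.length

/-- Tag of the rightmost uncanceled ")", if any. -/
def lastCl {τ : Type} (l : List (Br × τ)) : Option τ := (scan l).1.getLast?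

/-- Tag of the leftmost uncanceled "(", if any. -/
def headOp {τ : Type} (l : List (Br × τ)) : Option τ := (scan l).2.head?

/-- The string `S_i(M)`: segments are ordered by increasing height, then by
decreasing lower endpoint; each `[h,i]` contributes "(" and each `[h,i-1]`
contributes ")".  In the block of segments of height `t` the "(" over the
`[i-t+1, i]` segments come immediately before the ")" over the `[i-t, i-1]`
segments, and blocks appear for `t = 1, 2, …`. -/
def Si (M : MS) (i : ℕ) : List (Br × Seg) :=
  (List.range i).flatMap fun t0 =>
    let t := t0 + 1
    List.replicate (M.count (i - t + 1, i)) (Br.op, ((i - t + 1 : ℕ), i)) ++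
    List.replicate (M.count (i - t, i - 1)) (Br.cl, ((i - t : ℕ), i - 1))

/-- The string `S_i^*(M)`: segments ordered by increasing height, then by
increasing lower endpoint; each `[i,j]` contributes "(" and each `[i+1,j]`
contributes ")".  In the block of height `t` the "(" below the `[i, i+t-1]`
segments come immediately before the ")" below the `[i+1, i+t]` segments. -/
def SiStar (n : ℕ) (M : MS) (i : ℕ) : List (Br × Seg) :=
  (List.range n).flatMap fun t0 =>
    let t := t0 + 1
    List.replicate (M.count (i, i + t - 1)) (Br.op, (i, i + t - 1)) ++
    List.replicate (M.count (i + 1, i + t)) (Br.cl, (i + 1, i + t))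

/-- The crystal operator `f_i` on multisegments: it changes the segment `[h,i-1]`
under the rightmost uncanceled ")" of `S_i(M)` into `[h,i]`, or adds a new
segment `[i,i]` if there is no uncanceled ")". -/
def fM (i : ℕ) (M : MS) : MS :=
  match lastCl (Si M i) with
  | some s => M.erase s + {(s.1, i)}
  | none => M + {(i, i)}

/-- The crystal operator `e_i` on multisegments: it changes the segment `[h,i]`
under the leftmost uncanceled "(" of `S_i(M)` into `[h,i-1]` (deleting it when
`h = i`), or returns `none` (i.e. `0`) if there is no uncanceled "(". -/
def eM (i : ℕ) (M : MS) : Option MS :=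
  match headOp (Si M i) with
  | some s => some (if s.1 = i then M.erase s else M.erase s + {(s.1, i - 1)})
  | none => none

/-- The operator `f_i^*`: it changes the segment `[i+1,j]` under the rightmost
uncanceled ")" of `S_i^*(M)` into `[i,j]`, or adds `[i,i]` if there is none. -/
def fMStar (n i : ℕ) (M : MS) : MS :=
  match lastCl (SiStar n M i) with
  | some s => M.erase s + {(i, s.2)}
  | none => M + {(i, i)}

/-- The operator `e_i^*`: it changes the segment `[i,j]` under the leftmost
uncanceled "(" of `S_i^*(M)` into `[i+1,j]` (deleting it when `j = i`), or
returns `none` if there is no uncanceled "(". -/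
def eMStar (n i : ℕ) (M : MS) : Option MS :=
  match headOp (SiStar n M i) with
  | some s => some (if s.2 = i then M.erase s else M.erase s + {(i + 1, s.2)})
  | none => none

/-- The number of boxes labeled `j` in `M`: each segment `[a,b]` contains one
box labeled `j` for each `a ≤ j ≤ b`. -/
def boxes (M : MS) (j : ℕ) : ℕ :=
  (M.filter (fun s => s.1 ≤ j ∧ j ≤ s.2)).card

/-- The pairing `⟨wt(M), α_i^∨⟩ = #(boxes i-1) + #(boxes i+1) - 2 #(boxes i)`. -/
def wtPair (M : MS) (i : ℕ) : ℤ :=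
  (boxes M (i - 1) : ℤ) + (boxes M (i + 1) : ℤ) - 2 * (boxes M i : ℤ)


lemma foldl_step_eq {τ : Type} (l : List (Br × τ)) : ∀ c o : List τ,
    l.foldl step (c, o) = (c ++ (scan l).1.drop o.length,
      o.take (o.length - (scan l).1.length) ++ (scan l).2) := by
  induction l with
  | nil => intro c o; simp [scan]
  | cons p l ih =>
    intro c o
    obtain ⟨b, s⟩ := p
    cases b with
    | op =>
      have hscan : scan ((Br.op, s) :: l) = ((scan l).1.drop 1,
          [s].take (1 - (scan l).1.length) ++ (scan l).2) := by
        show List.foldl step (step ([],[]) (Br.op,s)) l = _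
        rw [show step ([],[]) (Br.op,s) = ([], ([s] : List τ)) from rfl, ih]
        simp
      rw [show ((Br.op, s) :: l).foldl step (c, o) = l.foldl step (c, o ++ [s]) from rfl,
        ih, hscan]
      rcases hc : (scan l).1 with _ | ⟨x, c₁⟩
      · simp only [hc, List.drop_nil, List.length_nil, List.drop_zero, List.length_append,
          List.length_singleton, Nat.sub_zero, List.append_nil, Prod.mk.injEq, true_and]
        rw [List.take_of_length_le (by simp)]
        simp
      · simp only [hc, List.length_append, List.length_cons, List.length_singleton,
          List.drop_succ_cons, List.length_drop, Prod.mk.injEq, List.length_nil]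
        constructor
        · rw [List.drop_drop]
          congr 2
          omega
        · have h1 : (1 : ℕ) - (c₁.length + 1) = 0 := by omega
          rw [h1]
          simp only [List.take_zero, List.nil_append]
          rw [List.take_append_of_le_length (by omega)]
          congr 2
          omega
    | cl =>
      have hscan : scan ((Br.cl, s) :: l) = (s :: (scan l).1, (scan l).2) := by
        show List.foldl step (step ([],[]) (Br.cl,s)) l = _
        rw [show step ([],[]) (Br.cl,s) = (([s] : List τ), ([] : List τ)) from rfl, ih]
        simp
      rw [hscan]
      rcases o with _ | ⟨y, o⟩
      · rw [show ((Br.cl, s) :: l).foldl step (c, []) = l.foldl step (c ++ [s], []) from rfl, ih]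
        simp
      · rw [show ((Br.cl, s) :: l).foldl step (c, y :: o) =
          l.foldl step (c, (y :: o).dropLast) from rfl, ih]
        simp only [List.length_dropLast, List.length_cons, Nat.add_sub_cancel,
          List.length_drop, List.drop_succ_cons, Prod.mk.injEq, true_and]
        congr 1
        rw [List.dropLast_eq_take, List.take_take]
        congr 1
        simp only [List.length_cons]
        omega

lemma scan_cons_op {τ : Type} (x : τ) (l : List (Br × τ)) :
    scan ((Br.op, x) :: l) = ((scan l).1.drop 1,
      [x].take (1 - (scan l).1.length) ++ (scan l).2) := by
  show List.foldl step (step ([],[]) (Br.op,x)) l = _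
  rw [show step ([],[]) (Br.op,x) = ([], ([x] : List τ)) from rfl, foldl_step_eq]
  simp

lemma scan_cons_cl {τ : Type} (x : τ) (l : List (Br × τ)) :
    scan ((Br.cl, x) :: l) = (x :: (scan l).1, (scan l).2) := by
  show List.foldl step (step ([],[]) (Br.cl,x)) l = _
  rw [show step ([],[]) (Br.cl,x) = (([x] : List τ), ([] : List τ)) from rfl, foldl_step_eq]
  simp

lemma mem_scan {τ : Type} (l : List (Br × τ)) :
    ∀ x : τ, (x ∈ (scan l).1 → (Br.cl, x) ∈ l) ∧ (x ∈ (scan l).2 → (Br.op, x) ∈ l) := by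
  induction l with
  | nil => intro x; simp [scan]
  | cons p l ih =>
    intro x
    obtain ⟨b, s⟩ := p
    cases b with
    | op =>
      rw [scan_cons_op]
      constructor
      · intro hx
        exact List.mem_cons_of_mem _ ((ih x).1 (List.mem_of_mem_drop hx))
      · intro hx
        simp only [List.mem_append] at hx
        rcases hx with hx | hx
        · have := List.mem_of_mem_take hx
          simp only [List.mem_singleton] at this
          subst this
          exact List.mem_cons_self
        · exact List.mem_cons_of_mem _ ((ih x).2 hx)
    | cl =>
      rw [scan_cons_cl]
      constructor
      · intro hx
        simp only [List.mem_cons] at hx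
        rcases hx with hx | hx
        · subst hx; exact List.mem_cons_self
        · exact List.mem_cons_of_mem _ ((ih x).1 hx)
      · intro hx
        exact List.mem_cons_of_mem _ ((ih x).2 hx)
lemma eps_ur_count {τ : Type} (l : List (Br × τ)) :
    epsStr l + l.countP (fun p => p.1 == Br.cl) =
      urStr l + l.countP (fun p => p.1 == Br.op) := by
  induction l using List.reverseRecOn with
  | nil => simp [epsStr, urStr, scan]
  | append_singleton l p ih =>
    have hs : scan (l ++ [p]) = step (scan l) p := by
      simp [scan, List.foldl_append]
    simp only [epsStr, urStr] at ih ⊢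
    obtain ⟨b, s⟩ := p
    cases b with
    | op =>
      have h2 : step (scan l) (Br.op, s) = ((scan l).1, (scan l).2 ++ [s]) := rfl
      rw [hs, h2]
      simp only [List.countP_append, List.countP_cons, List.countP_nil,
        List.length_append, List.length_singleton]
      norm_num
      rw [if_neg (show ¬Br.op = Br.cl by decide)]
      omega
    | cl =>
      have h2 : step (scan l) (Br.cl, s) = if (scan l).2.isEmpty then
          ((scan l).1 ++ [s], (scan l).2) else ((scan l).1, (scan l).2.dropLast) := rfl
      rw [hs, h2]
      simp only [List.countP_append, List.countP_cons, List.countP_nil]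
      norm_num
      rw [if_neg (show ¬Br.cl = Br.op by decide)]
      by_cases he : (scan l).2.isEmpty
      · rw [if_pos (List.isEmpty_iff.mp he)]
        have h3 : (scan l).2.length = 0 := by simpa [List.isEmpty_iff_length_eq_zero] using he
        simp only [List.length_append, List.length_singleton]
        omega
      · rw [if_neg (fun h => he (List.isEmpty_iff.mpr h))]
        have h3 : (scan l).2.length ≠ 0 := by
          simpa [List.isEmpty_iff_length_eq_zero] using he
        simp only [List.length_dropLast]
        omega
lemma countP_flatMap_range {α : Type} (m : ℕ) (f : ℕ → List α) (p : α → Bool) :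
    ((List.range m).flatMap f).countP p = ∑ t0 ∈ Finset.range m, (f t0).countP p := by
  induction m with
  | zero => simp
  | succ m ih => rw [List.range_succ, List.flatMap_append, List.countP_append,
      Finset.sum_range_succ, ih]; simp

lemma countP_replicate {α : Type} (k : ℕ) (a : α) (p : α → Bool) :
    (List.replicate k a).countP p = if p a then k else 0 := by
  induction k with
  | zero => simp
  | succ k ih => rw [List.replicate_succ, List.countP_cons, ih]; split_ifs <;> simp_all

/-- generic: sum of counts over a parametrized family equals countP. -/
lemma sum_count_eq_countP (n : ℕ) (M : MS) (hM : IsMS n M) (m : ℕ) (g : ℕ → Seg)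
    (q : Seg → Prop) [DecidablePred q]
    (hind : ∀ a : Seg, 1 ≤ a.1 → a.1 ≤ a.2 → a.2 ≤ n →
      (∑ t0 ∈ Finset.range m, (if g t0 = a then 1 else 0)) = if q a then 1 else 0) :
    (∑ t0 ∈ Finset.range m, M.count (g t0)) = M.countP q := by
  induction M using Multiset.induction_on with
  | empty => simp
  | cons a s ih =>
    have ha := hM a (Multiset.mem_cons_self a s)
    have hs : IsMS n s := fun x hx => hM x (Multiset.mem_cons_of_mem hx)
    simp only [Multiset.count_cons, Multiset.countP_cons, Finset.sum_add_distrib,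
      ih hs, hind a ha.1 ha.2.1 ha.2.2]

lemma indicator_sum_unique (m c : ℕ) (hc : c < m) :
    (∑ t0 ∈ Finset.range m, (if t0 = c then (1:ℕ) else 0)) = 1 := by
  rw [Finset.sum_ite_eq' (Finset.range m) c (fun _ => (1:ℕ))]
  simp [hc]

lemma countOp_Si (n i : ℕ) (hi : 1 ≤ i) (M : MS) (hM : IsMS n M) :
    (Si M i).countP (fun p => p.1 == Br.op) = M.countP (fun a => a.2 = i) := by
  rw [Si]
  simp only []
  rw [countP_flatMap_range]
  have hblock : ∀ t0, ((List.replicate (M.count (i - (t0+1) + 1, i)) (Br.op, ((i - (t0+1) + 1 : ℕ), i)) ++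
      List.replicate (M.count (i - (t0+1), i - 1)) (Br.cl, ((i - (t0+1) : ℕ), i - 1))).countP
        (fun p => p.1 == Br.op)) = M.count (i - (t0+1) + 1, i) := by
    intro t0
    rw [List.countP_append, countP_replicate, countP_replicate]
    simp
  calc (∑ t0 ∈ Finset.range i, _) = ∑ t0 ∈ Finset.range i, M.count (i - (t0+1) + 1, i) :=
        Finset.sum_congr rfl (fun t0 _ => hblock t0)
    _ = M.countP (fun a => a.2 = i) := by
        apply sum_count_eq_countP n M hM i (fun t0 => (i - (t0+1) + 1, i))
        rintro ⟨a1, a2⟩ h1 h2 h3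
        simp only [] at h1 h2 h3 ⊢
        by_cases hq : a2 = i
        · rw [if_pos hq]
          have heq : ∀ t0 ∈ Finset.range i, (if ((i - (t0+1) + 1 : ℕ), i) = ((a1, a2) : Seg) then (1:ℕ) else 0)
              = if t0 = i - a1 then 1 else 0 := by
            intro t0 ht0
            rw [Finset.mem_range] at ht0
            have hiff : (((i - (t0+1) + 1 : ℕ), i) : Seg) = ((a1, a2) : Seg) ↔ t0 = i - a1 := by
              simp only [Prod.mk.injEq]
              omega
            rw [if_congr hiff rfl rfl]
          rw [Finset.sum_congr rfl heq, indicator_sum_unique _ _ (by omega)]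
        · rw [if_neg hq]
          apply Finset.sum_eq_zero
          intro t0 _
          rw [if_neg]
          simp only [Prod.mk.injEq]
          omega

lemma countCl_Si (n i : ℕ) (hi : 1 ≤ i) (M : MS) (hM : IsMS n M) :
    (Si M i).countP (fun p => p.1 == Br.cl) = M.countP (fun a => a.2 = i - 1) := by
  rw [Si]
  simp only []
  rw [countP_flatMap_range]
  have hblock : ∀ t0, ((List.replicate (M.count (i - (t0+1) + 1, i)) (Br.op, ((i - (t0+1) + 1 : ℕ), i)) ++
      List.replicate (M.count (i - (t0+1), i - 1)) (Br.cl, ((i - (t0+1) : ℕ), i - 1))).countP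
        (fun p => p.1 == Br.cl)) = M.count (i - (t0+1), i - 1) := by
    intro t0
    rw [List.countP_append, countP_replicate, countP_replicate]
    simp
  calc (∑ t0 ∈ Finset.range i, _) = ∑ t0 ∈ Finset.range i, M.count (i - (t0+1), i - 1) :=
        Finset.sum_congr rfl (fun t0 _ => hblock t0)
    _ = M.countP (fun a => a.2 = i - 1) := by
        apply sum_count_eq_countP n M hM i (fun t0 => (i - (t0+1), i - 1))
        rintro ⟨a1, a2⟩ h1 h2 h3
        simp only [] at h1 h2 h3 ⊢
        by_cases hq : a2 = i - 1
        · rw [if_pos hq]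
          have heq : ∀ t0 ∈ Finset.range i, (if ((i - (t0+1) : ℕ), i - 1) = ((a1, a2) : Seg) then (1:ℕ) else 0)
              = if t0 = i - 1 - a1 then 1 else 0 := by
            intro t0 ht0
            rw [Finset.mem_range] at ht0
            have hiff : (((i - (t0+1) : ℕ), i - 1) : Seg) = ((a1, a2) : Seg) ↔ t0 = i - 1 - a1 := by
              simp only [Prod.mk.injEq]
              omega
            rw [if_congr hiff rfl rfl]
          rw [Finset.sum_congr rfl heq, indicator_sum_unique _ _ (by omega)]
        · rw [if_neg hq]
          apply Finset.sum_eq_zero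
          intro t0 _
          rw [if_neg]
          simp only [Prod.mk.injEq]
          omega

lemma countOp_SiStar (n i : ℕ) (hi : 1 ≤ i) (M : MS) (hM : IsMS n M) :
    (SiStar n M i).countP (fun p => p.1 == Br.op) = M.countP (fun a => a.1 = i) := by
  rw [SiStar]
  simp only []
  rw [countP_flatMap_range]
  have hblock : ∀ t0, ((List.replicate (M.count (i, i + (t0+1) - 1)) (Br.op, (i, i + (t0+1) - 1)) ++
      List.replicate (M.count (i + 1, i + (t0+1))) (Br.cl, (i + 1, i + (t0+1)))).countP
        (fun p => p.1 == Br.op)) = M.count (i, i + (t0+1) - 1) := by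
    intro t0
    rw [List.countP_append, countP_replicate, countP_replicate]
    simp
  calc (∑ t0 ∈ Finset.range n, _) = ∑ t0 ∈ Finset.range n, M.count (i, i + (t0+1) - 1) :=
        Finset.sum_congr rfl (fun t0 _ => hblock t0)
    _ = M.countP (fun a => a.1 = i) := by
        apply sum_count_eq_countP n M hM n (fun t0 => (i, i + (t0+1) - 1))
        rintro ⟨a1, a2⟩ h1 h2 h3
        simp only [] at h1 h2 h3 ⊢
        by_cases hq : a1 = i
        · rw [if_pos hq]
          have heq : ∀ t0 ∈ Finset.range n, (if ((i : ℕ), i + (t0+1) - 1) = ((a1, a2) : Seg) then (1:ℕ) else 0)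
              = if t0 = a2 - i then 1 else 0 := by
            intro t0 ht0
            rw [Finset.mem_range] at ht0
            have hiff : (((i : ℕ), i + (t0+1) - 1) : Seg) = ((a1, a2) : Seg) ↔ t0 = a2 - i := by
              simp only [Prod.mk.injEq]
              omega
            rw [if_congr hiff rfl rfl]
          rw [Finset.sum_congr rfl heq, indicator_sum_unique _ _ (by omega)]
        · rw [if_neg hq]
          apply Finset.sum_eq_zero
          intro t0 _
          rw [if_neg]
          simp only [Prod.mk.injEq]
          omega

lemma countCl_SiStar (n i : ℕ) (hi : 1 ≤ i) (hin : i ≤ n) (M : MS) (hM : IsMS n M) :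
    (SiStar n M i).countP (fun p => p.1 == Br.cl) = M.countP (fun a => a.1 = i + 1) := by
  rw [SiStar]
  simp only []
  rw [countP_flatMap_range]
  have hblock : ∀ t0, ((List.replicate (M.count (i, i + (t0+1) - 1)) (Br.op, (i, i + (t0+1) - 1)) ++
      List.replicate (M.count (i + 1, i + (t0+1))) (Br.cl, (i + 1, i + (t0+1)))).countP
        (fun p => p.1 == Br.cl)) = M.count (i + 1, i + (t0+1)) := by
    intro t0
    rw [List.countP_append, countP_replicate, countP_replicate]
    simp
  calc (∑ t0 ∈ Finset.range n, _) = ∑ t0 ∈ Finset.range n, M.count (i + 1, i + (t0+1)) :=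
        Finset.sum_congr rfl (fun t0 _ => hblock t0)
    _ = M.countP (fun a => a.1 = i + 1) := by
        apply sum_count_eq_countP n M hM n (fun t0 => (i + 1, i + (t0+1)))
        rintro ⟨a1, a2⟩ h1 h2 h3
        simp only [] at h1 h2 h3 ⊢
        by_cases hq : a1 = i + 1
        · rw [if_pos hq]
          have heq : ∀ t0 ∈ Finset.range n, (if ((i + 1 : ℕ), i + (t0+1)) = ((a1, a2) : Seg) then (1:ℕ) else 0)
              = if t0 = a2 - i - 1 then 1 else 0 := by
            intro t0 ht0
            rw [Finset.mem_range] at ht0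
            have hiff : (((i + 1 : ℕ), i + (t0+1)) : Seg) = ((a1, a2) : Seg) ↔ t0 = a2 - i - 1 := by
              simp only [Prod.mk.injEq]
              omega
            rw [if_congr hiff rfl rfl]
          rw [Finset.sum_congr rfl heq, indicator_sum_unique _ _ (by omega)]
        · rw [if_neg hq]
          apply Finset.sum_eq_zero
          intro t0 _
          rw [if_neg]
          simp only [Prod.mk.injEq]
          omega

lemma boxes_left (n i : ℕ) (hi : 1 ≤ i) (M : MS) (hM : IsMS n M) :
    boxes M i + M.countP (fun a => a.2 = i - 1) =
      boxes M (i - 1) + M.countP (fun a => a.1 = i) := by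
  induction M using Multiset.induction_on with
  | empty => simp [boxes]
  | cons a s ih =>
    have ha := hM a (Multiset.mem_cons_self a s)
    have hs : IsMS n s := fun x hx => hM x (Multiset.mem_cons_of_mem hx)
    have ih' := ih hs
    simp only [boxes, ← Multiset.countP_eq_card_filter] at ih' ⊢
    obtain ⟨a1, a2⟩ := a
    simp only [] at ha
    simp only [Multiset.countP_cons]
    split_ifs <;> omega

lemma boxes_right (n i : ℕ) (M : MS) (hM : IsMS n M) :
    boxes M i + M.countP (fun a => a.1 = i + 1) =
      boxes M (i + 1) + M.countP (fun a => a.2 = i) := by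
  induction M using Multiset.induction_on with
  | empty => simp [boxes]
  | cons a s ih =>
    have ha := hM a (Multiset.mem_cons_self a s)
    have hs : IsMS n s := fun x hx => hM x (Multiset.mem_cons_of_mem hx)
    have ih' := ih hs
    simp only [boxes, ← Multiset.countP_eq_card_filter] at ih' ⊢
    obtain ⟨a1, a2⟩ := a
    simp only [] at ha
    simp only [Multiset.countP_cons]
    split_ifs <;> omega
lemma Si_congr (M M' : MS) (i : ℕ)
    (h1 : ∀ a, M.count (a, i) = M'.count (a, i))
    (h2 : ∀ a, M.count (a, i - 1) = M'.count (a, i - 1)) : Si M i = Si M' i := by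
  unfold Si
  congr 1
  funext t0
  simp only []
  rw [h1, h2]

lemma SiStar_congr (n : ℕ) (M M' : MS) (i : ℕ)
    (h1 : ∀ b, M.count (i, b) = M'.count (i, b))
    (h2 : ∀ b, M.count (i + 1, b) = M'.count (i + 1, b)) : SiStar n M i = SiStar n M' i := by
  unfold SiStar
  congr 1
  funext t0
  simp only []
  rw [h1, h2]

lemma Si_add_ii (i : ℕ) (hi : 1 ≤ i) (M : MS) :
    Si (M + {((i:ℕ), i)}) i = (Br.op, ((i:ℕ), i)) :: Si M i := by
  obtain ⟨k, rfl⟩ : ∃ k, i = k + 1 := ⟨i - 1, by omega⟩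
  unfold Si
  rw [List.range_succ_eq_map, List.flatMap_cons, List.flatMap_cons]
  have h0 : (List.replicate ((M + {((k+1:ℕ), k+1)}).count (k + 1 - (0+1) + 1, k+1)) (Br.op, ((k + 1 - (0+1) + 1 : ℕ), k+1)) ++
      List.replicate ((M + {((k+1:ℕ), k+1)}).count (k + 1 - (0+1), k+1 - 1)) (Br.cl, ((k + 1 - (0+1) : ℕ), k+1 - 1)))
      = (Br.op, ((k+1 : ℕ), k+1)) ::
      (List.replicate (M.count (k + 1 - (0+1) + 1, k+1)) (Br.op, ((k + 1 - (0+1) + 1 : ℕ), k+1)) ++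
      List.replicate (M.count (k + 1 - (0+1), k+1 - 1)) (Br.cl, ((k + 1 - (0+1) : ℕ), k+1 - 1))) := by
    simp only [Nat.add_sub_cancel, Multiset.count_add, Multiset.count_singleton]
    simp [List.replicate_succ]
  have hrest : ∀ N : MS, (List.map Nat.succ (List.range k)).flatMap (fun t0 =>
      let t := t0 + 1
      List.replicate (N.count (k + 1 - t + 1, k+1)) (Br.op, ((k + 1 - t + 1 : ℕ), k+1)) ++
      List.replicate (N.count (k + 1 - t, k+1 - 1)) (Br.cl, ((k + 1 - t : ℕ), k+1 - 1)))
      = (List.range k).flatMap (fun j =>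
      List.replicate (N.count (k - j, k+1)) (Br.op, ((k - j : ℕ), k+1)) ++
      List.replicate (N.count (k - j - 1, k)) (Br.cl, ((k - j - 1 : ℕ), k))) := by
    intro N
    rw [List.flatMap_def, List.flatMap_def, List.map_map]
    congr 1
    apply List.map_congr_left
    intro j hj
    rw [List.mem_range] at hj
    simp only [Function.comp]
    have e1 : k + 1 - (Nat.succ j + 1) + 1 = k - j := by omega
    have e2 : k + 1 - (Nat.succ j + 1) = k - j - 1 := by omega
    have e3 : k + 1 - 1 = k := by omega
    rw [e1, e2, e3]
  have hcnt : ∀ j, j < k → ((M + {((k+1:ℕ), k+1)}).count (k - j, k+1) = M.count (k - j, k+1)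
      ∧ (M + {((k+1:ℕ), k+1)}).count (k - j - 1, k) = M.count (k - j - 1, k)) := by
    intro j hj
    constructor <;>
    · rw [Multiset.count_add, Multiset.count_singleton,
        if_neg (by simp only [Prod.mk.injEq]; omega)]
      omega
  have hfinal : (List.range k).flatMap (fun j =>
      List.replicate ((M + {((k+1:ℕ),k+1)}).count (k - j, k+1)) (Br.op, ((k - j:ℕ), k+1)) ++
      List.replicate ((M + {((k+1:ℕ),k+1)}).count (k - j - 1, k)) (Br.cl, ((k - j - 1:ℕ), k)))
      = (List.range k).flatMap (fun j =>
      List.replicate (M.count (k - j, k+1)) (Br.op, ((k - j:ℕ), k+1)) ++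
      List.replicate (M.count (k - j - 1, k)) (Br.cl, ((k - j - 1:ℕ), k))) := by
    rw [List.flatMap_def, List.flatMap_def]
    congr 1
    apply List.map_congr_left
    intro j hj
    rw [List.mem_range] at hj
    rw [(hcnt j hj).1, (hcnt j hj).2]
  rw [hrest, hrest, h0, hfinal, List.cons_append]

lemma SiStar_add_ii (n i : ℕ) (hn : 1 ≤ n) (M : MS) :
    SiStar n (M + {((i:ℕ), i)}) i = (Br.op, ((i:ℕ), i)) :: SiStar n M i := by
  obtain ⟨m, rfl⟩ : ∃ m, n = m + 1 := ⟨n - 1, by omega⟩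
  unfold SiStar
  rw [List.range_succ_eq_map, List.flatMap_cons, List.flatMap_cons]
  have h0 : (List.replicate ((M + {((i:ℕ), i)}).count (i, i + (0+1) - 1)) (Br.op, ((i:ℕ), i + (0+1) - 1)) ++
      List.replicate ((M + {((i:ℕ), i)}).count (i + 1, i + (0+1))) (Br.cl, ((i + 1 : ℕ), i + (0+1))))
      = (Br.op, ((i : ℕ), i)) ::
      (List.replicate (M.count (i, i + (0+1) - 1)) (Br.op, ((i:ℕ), i + (0+1) - 1)) ++
      List.replicate (M.count (i + 1, i + (0+1))) (Br.cl, ((i + 1 : ℕ), i + (0+1)))) := by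
    simp only [Nat.add_sub_cancel, Multiset.count_add, Multiset.count_singleton]
    simp [List.replicate_succ]
  have hrest : ∀ N : MS, (List.map Nat.succ (List.range m)).flatMap (fun t0 =>
      let t := t0 + 1
      List.replicate (N.count (i, i + t - 1)) (Br.op, ((i:ℕ), i + t - 1)) ++
      List.replicate (N.count (i + 1, i + t)) (Br.cl, ((i + 1 : ℕ), i + t)))
      = (List.range m).flatMap (fun j =>
      List.replicate (N.count (i, i + j + 1)) (Br.op, ((i:ℕ), i + j + 1)) ++
      List.replicate (N.count (i + 1, i + j + 2)) (Br.cl, ((i + 1 : ℕ), i + j + 2))) := by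
    intro N
    rw [List.flatMap_def, List.flatMap_def, List.map_map]
    congr 1
  have hcnt : ∀ j : ℕ, ((M + {((i:ℕ), i)}).count (i, i + j + 1) = M.count (i, i + j + 1)
      ∧ (M + {((i:ℕ), i)}).count (i + 1, i + j + 2) = M.count (i + 1, i + j + 2)) := by
    intro j
    constructor <;>
    · rw [Multiset.count_add, Multiset.count_singleton,
        if_neg (by simp only [Prod.mk.injEq]; omega)]
      omega
  have hfinal : (List.range m).flatMap (fun j =>
      List.replicate ((M + {((i:ℕ), i)}).count (i, i + j + 1)) (Br.op, ((i:ℕ), i + j + 1)) ++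
      List.replicate ((M + {((i:ℕ), i)}).count (i + 1, i + j + 2)) (Br.cl, ((i + 1 : ℕ), i + j + 2)))
      = (List.range m).flatMap (fun j =>
      List.replicate (M.count (i, i + j + 1)) (Br.op, ((i:ℕ), i + j + 1)) ++
      List.replicate (M.count (i + 1, i + j + 2)) (Br.cl, ((i + 1 : ℕ), i + j + 2))) := by
    rw [List.flatMap_def, List.flatMap_def]
    congr 1
    apply List.map_congr_left
    intro j hj
    rw [(hcnt j).1, (hcnt j).2]
  rw [hrest, hrest, h0, hfinal, List.cons_append]

lemma cl_tag_Si (M : MS) (i : ℕ) (s : Seg) (h : (Br.cl, s) ∈ Si M i) :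
    s ∈ M ∧ s.2 = i - 1 := by
  unfold Si at h
  rw [List.mem_flatMap] at h
  obtain ⟨t0, ht0, hmem⟩ := h
  simp only [] at hmem
  rw [List.mem_append, List.mem_replicate, List.mem_replicate] at hmem
  rcases hmem with ⟨_, heq⟩ | ⟨hne, heq⟩
  · exact Br.noConfusion (congrArg Prod.fst heq)
  · have hs : s = ((i - (t0+1) : ℕ), i - 1) := congrArg Prod.snd heq
    subst hs
    refine ⟨Multiset.count_pos.mp (Nat.pos_of_ne_zero hne), rfl⟩

lemma cl_tag_SiStar (n : ℕ) (M : MS) (i : ℕ) (s : Seg) (h : (Br.cl, s) ∈ SiStar n M i) :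
    s ∈ M ∧ s.1 = i + 1 := by
  unfold SiStar at h
  rw [List.mem_flatMap] at h
  obtain ⟨t0, ht0, hmem⟩ := h
  simp only [] at hmem
  rw [List.mem_append, List.mem_replicate, List.mem_replicate] at hmem
  rcases hmem with ⟨_, heq⟩ | ⟨hne, heq⟩
  · exact Br.noConfusion (congrArg Prod.fst heq)
  · have hs : s = ((i + 1 : ℕ), i + (t0+1)) := congrArg Prod.snd heq
    subst hs
    refine ⟨Multiset.count_pos.mp (Nat.pos_of_ne_zero hne), rfl⟩

lemma getLast?_drop_one {τ : Type} (l : List τ) (h : 2 ≤ l.length) :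
    (l.drop 1).getLast? = l.getLast? := by
  match l, h with
  | a :: b :: t, _ => simp [List.getLast?_cons_cons]

lemma erase_add_singleton {α : Type*} [DecidableEq α] (t : Multiset α) (a b : α) (h : b ≠ a) :
    (t + {a}).erase b = t.erase b + {a} := by
  rw [add_comm t {a}, Multiset.singleton_add, Multiset.erase_cons_tail _ (Ne.symm h),
    ← Multiset.singleton_add, add_comm]

lemma lastCl_mem {τ : Type} (l : List (Br × τ)) (s : τ) (h : lastCl l = some s) :
    s ∈ (scan l).1 :=
  List.mem_of_getLast? h

lemma ur_ge_two (n i : ℕ) (hi : 1 ≤ i) (hin : i ≤ n) (M : MS) (hM : IsMS n M)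
    (h : 2 ≤ (epsStr (Si M i) : ℤ) + (epsStr (SiStar n M i) : ℤ) + wtPair M i) :
    2 ≤ urStr (Si M i) + urStr (SiStar n M i) := by
  have c1 := eps_ur_count (Si M i)
  have c2 := eps_ur_count (SiStar n M i)
  rw [countOp_Si n i hi M hM, countCl_Si n i hi M hM] at c1
  rw [countOp_SiStar n i hi M hM, countCl_SiStar n i hi hin M hM] at c2
  have b1 := boxes_left n i hi M hM
  have b2 := boxes_right n i M hM
  unfold wtPair at h
  omega

theorem stmt11 (n i : ℕ) (hi : 1 ≤ i) (hin : i ≤ n) (M : MS) (hM : IsMS n M)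
    (h : 2 ≤ (epsStr (Si M i) : ℤ) + (epsStr (SiStar n M i) : ℤ) + wtPair M i) :
    fM i (fMStar n i M) = fMStar n i (fM i M) := by
  have key := ur_ge_two n i hi hin M hM h
  have hn : 1 ≤ n := le_trans hi hin
  rcases hSi : lastCl (Si M i) with _ | s
  · -- no uncanceled ")" in S_i
    have h1 : (scan (Si M i)).1 = [] := List.getLast?_eq_none_iff.mp hSi
    have hur1 : urStr (Si M i) = 0 := by simp [urStr, h1]
    have e2 : fM i M = M + {((i:ℕ), i)} := by simp only [fM, hSi]
    rcases hSt : lastCl (SiStar n M i) with _ | s'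
    · -- none / none
      have h2 : (scan (SiStar n M i)).1 = [] := List.getLast?_eq_none_iff.mp hSt
      have e1 : fMStar n i M = M + {((i:ℕ), i)} := by simp only [fMStar, hSt]
      have h3 : lastCl (Si (M + {((i:ℕ), i)}) i) = none := by
        show (scan (Si (M + {((i:ℕ), i)}) i)).1.getLast? = none
        rw [Si_add_ii i hi M, scan_cons_op, h1]
        simp
      have h4 : lastCl (SiStar n (M + {((i:ℕ), i)}) i) = none := by
        show (scan (SiStar n (M + {((i:ℕ), i)}) i)).1.getLast? = none
        rw [SiStar_add_ii n i hn M, scan_cons_op, h2]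
        simp
      rw [e1, e2]
      simp only [fM, fMStar, h3, h4]
    · -- none / some s'
      obtain ⟨s'1, s'2⟩ := s'
      have hmem' : (Br.cl, ((s'1:ℕ), s'2)) ∈ SiStar n M i :=
        (mem_scan (SiStar n M i) _).1 (lastCl_mem _ _ hSt)
      obtain ⟨hs'M, hs'1⟩ := cl_tag_SiStar n M i _ hmem'
      have hs'b := hM _ hs'M
      simp only [] at hs'1 hs'b
      have hA : s'1 = i + 1 := hs'1
      have hB : i + 1 ≤ s'2 := by omega
      have hur2 : 2 ≤ urStr (SiStar n M i) := by omega
      have h4 : lastCl (SiStar n (M + {((i:ℕ), i)}) i) = some ((s'1:ℕ), s'2) := by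
        show (scan (SiStar n (M + {((i:ℕ), i)}) i)).1.getLast? = _
        rw [SiStar_add_ii n i hn M, scan_cons_op, getLast?_drop_one _ hur2]
        exact hSt
      have hne : ((s'1:ℕ), s'2) ≠ ((i:ℕ), i) := by
        simp only [ne_eq, Prod.mk.injEq]
        omega
      have eR : fMStar n i (fM i M) = M.erase ((s'1:ℕ), s'2) + {((i:ℕ), i)} + {((i:ℕ), s'2)} := by
        rw [e2]
        simp only [fMStar, h4]
        rw [erase_add_singleton _ _ _ hne]
      have e1 : fMStar n i M = M.erase ((s'1:ℕ), s'2) + {((i:ℕ), s'2)} := by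
        simp only [fMStar, hSt]
      have hSiEq : Si (fMStar n i M) i = Si M i := by
        rw [e1]
        apply Si_congr
        · intro a
          rw [Multiset.count_add, Multiset.count_singleton,
            if_neg (by simp only [Prod.mk.injEq]; omega),
            Multiset.count_erase_of_ne (by simp only [ne_eq, Prod.mk.injEq]; omega)]
          omega
        · intro a
          rw [Multiset.count_add, Multiset.count_singleton,
            if_neg (by simp only [Prod.mk.injEq]; omega),
            Multiset.count_erase_of_ne (by simp only [ne_eq, Prod.mk.injEq]; omega)]
          omega
      have h3' : lastCl (Si (fMStar n i M) i) = none := by rw [hSiEq]; exact hSi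
      calc fM i (fMStar n i M) = fMStar n i M + {((i:ℕ), i)} := by simp only [fM, h3']
        _ = M.erase ((s'1:ℕ), s'2) + {((i:ℕ), s'2)} + {((i:ℕ), i)} := by rw [e1]
        _ = M.erase ((s'1:ℕ), s'2) + {((i:ℕ), i)} + {((i:ℕ), s'2)} := add_right_comm _ _ _
        _ = fMStar n i (fM i M) := eR.symm
  · -- some s
    obtain ⟨s1, s2⟩ := s
    have hmem : (Br.cl, ((s1:ℕ), s2)) ∈ Si M i :=
      (mem_scan (Si M i) _).1 (lastCl_mem _ _ hSi)
    obtain ⟨hsM, hs2⟩ := cl_tag_Si M i _ hmem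
    have hsb := hM _ hsM
    simp only [] at hs2 hsb
    have hC : s2 = i - 1 := hs2
    have hD : 1 ≤ s1 := hsb.1
    have hE : s1 ≤ i - 1 := by omega
    have e2 : fM i M = M.erase ((s1:ℕ), s2) + {((s1:ℕ), i)} := by simp only [fM, hSi]
    have hStEq : SiStar n (fM i M) i = SiStar n M i := by
      rw [e2]
      apply SiStar_congr
      · intro b
        rw [Multiset.count_add, Multiset.count_singleton,
          if_neg (by simp only [Prod.mk.injEq]; omega),
          Multiset.count_erase_of_ne (by simp only [ne_eq, Prod.mk.injEq]; omega)]
        omega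
      · intro b
        rw [Multiset.count_add, Multiset.count_singleton,
          if_neg (by simp only [Prod.mk.injEq]; omega),
          Multiset.count_erase_of_ne (by simp only [ne_eq, Prod.mk.injEq]; omega)]
        omega
    rcases hSt : lastCl (SiStar n M i) with _ | s'
    · -- some / none
      have h2 : (scan (SiStar n M i)).1 = [] := List.getLast?_eq_none_iff.mp hSt
      have hur2 : urStr (SiStar n M i) = 0 := by simp [urStr, h2]
      have hur1 : 2 ≤ urStr (Si M i) := by omega
      have e1 : fMStar n i M = M + {((i:ℕ), i)} := by simp only [fMStar, hSt]
      have h3 : lastCl (Si (M + {((i:ℕ), i)}) i) = some ((s1:ℕ), s2) := by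
        show (scan (Si (M + {((i:ℕ), i)}) i)).1.getLast? = _
        rw [Si_add_ii i hi M, scan_cons_op, getLast?_drop_one _ hur1]
        exact hSi
      have hne : ((s1:ℕ), s2) ≠ ((i:ℕ), i) := by
        simp only [ne_eq, Prod.mk.injEq]
        omega
      have h4' : lastCl (SiStar n (fM i M) i) = none := by rw [hStEq]; exact hSt
      calc fM i (fMStar n i M)
          = (fMStar n i M).erase ((s1:ℕ), s2) + {((s1:ℕ), i)} := by
            rw [show fMStar n i M = fMStar n i M from rfl]
            conv_lhs => rw [e1]
            simp only [fM, h3]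
            rw [e1]
        _ = (M + {((i:ℕ), i)}).erase ((s1:ℕ), s2) + {((s1:ℕ), i)} := by
            rw [e1]
        _ = M.erase ((s1:ℕ), s2) + {((i:ℕ), i)} + {((s1:ℕ), i)} := by
            rw [erase_add_singleton _ _ _ hne]
        _ = M.erase ((s1:ℕ), s2) + {((s1:ℕ), i)} + {((i:ℕ), i)} := add_right_comm _ _ _
        _ = fM i M + {((i:ℕ), i)} := by rw [e2]
        _ = fMStar n i (fM i M) := by simp only [fMStar, h4']
    · -- some / some
      obtain ⟨s'1, s'2⟩ := s'
      have hmem' : (Br.cl, ((s'1:ℕ), s'2)) ∈ SiStar n M i :=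
        (mem_scan (SiStar n M i) _).1 (lastCl_mem _ _ hSt)
      obtain ⟨hs'M, hs'1⟩ := cl_tag_SiStar n M i _ hmem'
      have hs'b := hM _ hs'M
      simp only [] at hs'1 hs'b
      have hA : s'1 = i + 1 := hs'1
      have hB : i + 1 ≤ s'2 := by omega
      have e1 : fMStar n i M = M.erase ((s'1:ℕ), s'2) + {((i:ℕ), s'2)} := by
        simp only [fMStar, hSt]
      have hSiEq : Si (fMStar n i M) i = Si M i := by
        rw [e1]
        apply Si_congr
        · intro a
          rw [Multiset.count_add, Multiset.count_singleton,
            if_neg (by simp only [Prod.mk.injEq]; omega),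
            Multiset.count_erase_of_ne (by simp only [ne_eq, Prod.mk.injEq]; omega)]
          omega
        · intro a
          rw [Multiset.count_add, Multiset.count_singleton,
            if_neg (by simp only [Prod.mk.injEq]; omega),
            Multiset.count_erase_of_ne (by simp only [ne_eq, Prod.mk.injEq]; omega)]
          omega
      have h3' : lastCl (Si (fMStar n i M) i) = some ((s1:ℕ), s2) := by
        rw [hSiEq]; exact hSi
      have h4' : lastCl (SiStar n (fM i M) i) = some ((s'1:ℕ), s'2) := by
        rw [hStEq]; exact hSt
      have hne1 : ((s1:ℕ), s2) ≠ ((i:ℕ), s'2) := by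
        simp only [ne_eq, Prod.mk.injEq]
        omega
      have hne2 : ((s'1:ℕ), s'2) ≠ ((s1:ℕ), i) := by
        simp only [ne_eq, Prod.mk.injEq]
        omega
      calc fM i (fMStar n i M)
          = (fMStar n i M).erase ((s1:ℕ), s2) + {((s1:ℕ), i)} := by
            simp only [fM, h3']
        _ = (M.erase ((s'1:ℕ), s'2) + {((i:ℕ), s'2)}).erase ((s1:ℕ), s2) + {((s1:ℕ), i)} := by
            rw [e1]
        _ = (M.erase ((s'1:ℕ), s'2)).erase ((s1:ℕ), s2) + {((i:ℕ), s'2)} + {((s1:ℕ), i)} := by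
            rw [erase_add_singleton _ _ _ hne1]
        _ = (M.erase ((s1:ℕ), s2)).erase ((s'1:ℕ), s'2) + {((s1:ℕ), i)} + {((i:ℕ), s'2)} := by
            rw [Multiset.erase_comm, add_right_comm]
        _ = (M.erase ((s1:ℕ), s2) + {((s1:ℕ), i)}).erase ((s'1:ℕ), s'2) + {((i:ℕ), s'2)} := by
            rw [erase_add_singleton _ _ _ hne2]
        _ = (fM i M).erase ((s'1:ℕ), s'2) + {((i:ℕ), s'2)} := by rw [e2]
        _ = fMStar n i (fM i M) := by simp only [fMStar, h4']
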